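/- Bauer–Fike for the GSVD: Let (A,B) have GSVD A = U Σ_A X^{-1}, B = V Σ_B X^{-1} with generalized singular pairs (c_j, s_j). Let (c̃, s̃) be an approximate pair with approximate vector x̃ ≠ 0 and residual r = (s̃² A*A − c̃² B*B) x̃. Then there exists a pair (c_⋆, s_⋆) among the (c_j, s_j) such that |s̃² c_⋆² − c̃² s_⋆²| ≤ ‖X‖² · ‖r‖/‖x̃‖. -/

import Mathlib

open Matrix

noncomputable section

set_option maxHeartbeats 1000000
set_option synthInstance.maxHeartbeats 400000

/-- Euclidean norm of a complex vector. -/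
def en {ι : Type*} [Fintype ι] (v : ι → ℂ) : ℝ := Real.sqrt (∑ i, ‖v i‖ ^ 2)

lemma en_eq {k : ℕ} (v : Fin k → ℂ) :
    en v = ‖(WithLp.equiv 2 (Fin k → ℂ)).symm v‖ := by
  rw [EuclideanSpace.norm_eq]; rfl

lemma en_mulVec_le {k : ℕ} (M : Matrix (Fin k) (Fin k) ℂ) (v : Fin k → ℂ) :
    en (M.mulVec v) ≤ ‖Matrix.toEuclideanCLM (𝕜 := ℂ) M‖ * en v := by
  rw [en_eq, en_eq]
  have h : Matrix.toEuclideanCLM (𝕜 := ℂ) M ((WithLp.equiv 2 (Fin k → ℂ)).symm v)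
      = (WithLp.equiv 2 (Fin k → ℂ)).symm (Matrix.toLin' M v) := rfl
  rw [Matrix.toLin'_apply] at h
  calc ‖(WithLp.equiv 2 (Fin k → ℂ)).symm (M.mulVec v)‖
      = ‖Matrix.toEuclideanCLM (𝕜 := ℂ) M ((WithLp.equiv 2 (Fin k → ℂ)).symm v)‖ := by rw [h]
    _ ≤ _ := (Matrix.toEuclideanCLM (𝕜 := ℂ) M).le_opNorm _

lemma en_diag_ge {k : ℕ} (d : Fin k → ℝ) (v : Fin k → ℂ) (a : ℝ) (ha : 0 ≤ a)
    (hd : ∀ i, a ≤ |d i|) :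
    a * en v ≤ en ((Matrix.diagonal (fun i => (d i : ℂ))).mulVec v) := by
  unfold en
  rw [← Real.sqrt_sq ha, ← Real.sqrt_mul (sq_nonneg a)]
  apply Real.sqrt_le_sqrt
  rw [Finset.mul_sum]
  apply Finset.sum_le_sum
  intro i _
  rw [Matrix.mulVec_diagonal]
  have : ‖(d i : ℂ) * v i‖ = |d i| * ‖v i‖ := by
    rw [norm_mul, Complex.norm_real, Real.norm_eq_abs]
  rw [this, mul_pow]
  gcongr
  exact hd i

lemma en_pos {k : ℕ} (v : Fin k → ℂ) (hv : v ≠ 0) : 0 < en v := by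
  apply Real.sqrt_pos.mpr
  obtain ⟨i, hi⟩ : ∃ i, v i ≠ 0 := by
    by_contra h; push_neg at h; exact hv (funext h)
  apply Finset.sum_pos' (fun j _ => sq_nonneg _)
  exact ⟨i, Finset.mem_univ i, pow_pos (norm_pos_iff.mpr hi) 2⟩

/-- Bauer–Fike for the GSVD. -/
theorem stmt17 {m p n : ℕ}
    (A : Matrix (Fin m) (Fin n) ℂ) (B : Matrix (Fin p) (Fin n) ℂ)
    (U : Matrix (Fin m) (Fin n) ℂ) (V : Matrix (Fin p) (Fin n) ℂ)
    (X : Matrix (Fin n) (Fin n) ℂ) (hX : IsUnit X.det)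
    (hU : Uᴴ * U = 1) (hV : Vᴴ * V = 1)
    (c s : Fin n → ℝ) (hcs : ∀ j, c j ^ 2 + s j ^ 2 = 1)
    (hA : A = U * Matrix.diagonal (fun j => (c j : ℂ)) * X⁻¹)
    (hB : B = V * Matrix.diagonal (fun j => (s j : ℂ)) * X⁻¹)
    (ct st : ℝ) (xt : Fin n → ℂ) (hxt : xt ≠ 0)
    (r : Fin n → ℂ)
    (hr : r = ((st ^ 2 : ℝ) : ℂ) • (Aᴴ * A).mulVec xt - ((ct ^ 2 : ℝ) : ℂ) • (Bᴴ * B).mulVec xt) :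
    ∃ j, |st ^ 2 * c j ^ 2 - ct ^ 2 * s j ^ 2|
      ≤ ‖Matrix.toEuclideanCLM (𝕜 := ℂ) X‖ ^ 2 * (en r / en xt) := by
  haveI : Nonempty (Fin n) := by
    rcases Nat.eq_zero_or_pos n with h | h
    · subst h; exact absurd (funext fun i => i.elim0 : xt = 0) hxt
    · exact ⟨⟨0, h⟩⟩
  set d : Fin n → ℝ := fun j => st ^ 2 * c j ^ 2 - ct ^ 2 * s j ^ 2 with hd
  obtain ⟨j, -, hj⟩ := Finset.exists_min_image Finset.univ (fun j => |d j|) Finset.univ_nonempty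
  refine ⟨j, ?_⟩
  have hXc : IsUnit (Xᴴ).det := by rwa [Matrix.det_conjTranspose, isUnit_star]
  have hAA : Aᴴ * A = (Xᴴ)⁻¹ * Matrix.diagonal (fun j => ((c j : ℂ))^2) * X⁻¹ := by
    rw [hA]
    simp only [Matrix.conjTranspose_mul, Matrix.conjTranspose_nonsing_inv]
    have hdc : (Matrix.diagonal (fun j => (c j : ℂ)))ᴴ = Matrix.diagonal (fun j => (c j : ℂ)) := by
      ext i k
      simp only [Matrix.conjTranspose_apply]
      by_cases h : i = k
      · subst h; simp [Complex.conj_ofReal]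
      · rw [Matrix.diagonal_apply_ne _ (Ne.symm h), star_zero, Matrix.diagonal_apply_ne _ h]
    rw [hdc]
    simp only [Matrix.mul_assoc]
    rw [show Uᴴ * (U * (Matrix.diagonal (fun j => (c j : ℂ)) * X⁻¹))
        = Matrix.diagonal (fun j => (c j : ℂ)) * X⁻¹ by
      rw [← Matrix.mul_assoc, hU, Matrix.one_mul]]
    rw [show Matrix.diagonal (fun j => (c j : ℂ)) * (Matrix.diagonal (fun j => (c j : ℂ)) * X⁻¹)
        = Matrix.diagonal (fun j => ((c j : ℂ))^2) * X⁻¹ by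
      rw [← Matrix.mul_assoc, Matrix.diagonal_mul_diagonal,
          show (fun i => (c i : ℂ) * (c i : ℂ)) = (fun j => ((c j : ℂ))^2)
            from funext fun i => (pow_two _).symm]]
  have hBB : Bᴴ * B = (Xᴴ)⁻¹ * Matrix.diagonal (fun j => ((s j : ℂ))^2) * X⁻¹ := by
    rw [hB]
    simp only [Matrix.conjTranspose_mul, Matrix.conjTranspose_nonsing_inv]
    have hdc : (Matrix.diagonal (fun j => (s j : ℂ)))ᴴ = Matrix.diagonal (fun j => (s j : ℂ)) := by
      ext i k
      simp only [Matrix.conjTranspose_apply]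
      by_cases h : i = k
      · subst h; simp [Complex.conj_ofReal]
      · rw [Matrix.diagonal_apply_ne _ (Ne.symm h), star_zero, Matrix.diagonal_apply_ne _ h]
    rw [hdc]
    simp only [Matrix.mul_assoc]
    rw [show Vᴴ * (V * (Matrix.diagonal (fun j => (s j : ℂ)) * X⁻¹))
        = Matrix.diagonal (fun j => (s j : ℂ)) * X⁻¹ by
      rw [← Matrix.mul_assoc, hV, Matrix.one_mul]]
    rw [show Matrix.diagonal (fun j => (s j : ℂ)) * (Matrix.diagonal (fun j => (s j : ℂ)) * X⁻¹)
        = Matrix.diagonal (fun j => ((s j : ℂ))^2) * X⁻¹ by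
      rw [← Matrix.mul_assoc, Matrix.diagonal_mul_diagonal,
          show (fun i => (s i : ℂ) * (s i : ℂ)) = (fun j => ((s j : ℂ))^2)
            from funext fun i => (pow_two _).symm]]
  set D : Matrix (Fin n) (Fin n) ℂ := Matrix.diagonal (fun j => ((d j : ℝ) : ℂ)) with hD
  set M : Matrix (Fin n) (Fin n) ℂ :=
    ((st ^ 2 : ℝ) : ℂ) • (Aᴴ * A) - ((ct ^ 2 : ℝ) : ℂ) • (Bᴴ * B) with hM
  have hrM : r = M.mulVec xt := by
    rw [hr, hM, Matrix.sub_mulVec, Matrix.smul_mulVec, Matrix.smul_mulVec]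
  have hXM : Xᴴ * M = D * X⁻¹ := by
    rw [hM, hAA, hBB]
    rw [Matrix.mul_sub, Matrix.mul_smul, Matrix.mul_smul]
    have h1 : Xᴴ * ((Xᴴ)⁻¹ * Matrix.diagonal (fun j => ((c j : ℂ))^2) * X⁻¹)
        = Matrix.diagonal (fun j => ((c j : ℂ))^2) * X⁻¹ := by
      rw [← Matrix.mul_assoc, ← Matrix.mul_assoc, Matrix.mul_nonsing_inv _ hXc, Matrix.one_mul]
    have h2 : Xᴴ * ((Xᴴ)⁻¹ * Matrix.diagonal (fun j => ((s j : ℂ))^2) * X⁻¹)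
        = Matrix.diagonal (fun j => ((s j : ℂ))^2) * X⁻¹ := by
      rw [← Matrix.mul_assoc, ← Matrix.mul_assoc, Matrix.mul_nonsing_inv _ hXc, Matrix.one_mul]
    rw [h1, h2, hD]
    rw [← Matrix.smul_mul, ← Matrix.smul_mul, ← Matrix.sub_mul]
    congr 1
    ext i k
    by_cases h : i = k
    · subst h
      simp only [Matrix.sub_apply, Matrix.smul_apply, Matrix.diagonal_apply_eq, smul_eq_mul, hd]
      push_cast
      ring
    · simp [Matrix.diagonal_apply_ne _ h, h]
  set y : Fin n → ℂ := X⁻¹.mulVec xt with hy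
  have hxty : xt = X.mulVec y := by
    rw [hy, Matrix.mulVec_mulVec, Matrix.mul_nonsing_inv _ hX, Matrix.one_mulVec]
  have hDy : (Xᴴ).mulVec r = D.mulVec y := by
    rw [hrM, Matrix.mulVec_mulVec, hXM, ← Matrix.mulVec_mulVec]
  set N := ‖Matrix.toEuclideanCLM (𝕜 := ℂ) X‖ with hN
  have hNT : ‖Matrix.toEuclideanCLM (𝕜 := ℂ) Xᴴ‖ = N := by
    have h : (Xᴴ) = star X := rfl
    rw [h, map_star, ContinuousLinearMap.star_eq_adjoint]
    exact ContinuousLinearMap.adjoint.norm_map _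
  have hN0 : 0 ≤ N := norm_nonneg _
  have hdj0 : 0 ≤ |d j| := abs_nonneg _
  have key : |d j| * en xt ≤ N ^ 2 * en r := by
    calc |d j| * en xt = |d j| * en (X.mulVec y) := by rw [← hxty]
      _ ≤ |d j| * (N * en y) := by
          exact mul_le_mul_of_nonneg_left (en_mulVec_le X y) hdj0
      _ = N * (|d j| * en y) := by ring
      _ ≤ N * en (D.mulVec y) := by
          exact mul_le_mul_of_nonneg_left
            (en_diag_ge d y (|d j|) hdj0 (fun i => hj i (Finset.mem_univ i))) hN0
      _ = N * en ((Xᴴ).mulVec r) := by rw [hDy]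
      _ ≤ N * (N * en r) := by
          have h2 := en_mulVec_le Xᴴ r
          rw [hNT] at h2
          exact mul_le_mul_of_nonneg_left h2 hN0
      _ = N ^ 2 * en r := by ring
  have hxpos : 0 < en xt := en_pos xt hxt
  rw [mul_div_assoc', le_div_iff₀ hxpos]
  exact key
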